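/- For every irreducible fraction x = p/q with 0 < x < 1 and every k ≥ 5, the degree distributions of the Haros graphs G_x and G_{F(x)}, where F(x) = x/(1+x) = p/(p+q), satisfy the scaling equation P(k+1, F(x)) = P(k, x)/(1 + x), i.e. P(k, x) = (1 + x)·P(k+1, x/(1+x)). -/
import Mathlib


/-- Symbols for paths in the Farey binary tree. -/
inductive LR
  | L
  | R
deriving DecidableEq

/-- One step in the Farey binary tree: update the current pair of fractions
(represented as pairs (numerator, denominator) of naturals). -/
def fareyStep : ((ℕ × ℕ) × (ℕ × ℕ)) → LR → ((ℕ × ℕ) × (ℕ × ℕ))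
  | ((a, b), (c, d)), LR.L => ((a, b), (a + c, b + d))
  | ((a, b), (c, d)), LR.R => ((a + c, b + d), (c, d))

/-- The final pair of fractions of a word: after reading the first symbol `L`
the current pair is (0/1, 1/1); the remaining symbols update it. -/
def finalPair (w : List LR) : (ℕ × ℕ) × (ℕ × ℕ) :=
  w.tail.foldl fareyStep ((0, 1), (1, 1))

/-- The value ⟨w⟩ of a word: the mediant of its final pair, as (numerator, denominator). -/
def value (w : List LR) : ℕ × ℕ :=
  ((finalPair w).1.1 + (finalPair w).2.1, (finalPair w).1.2 + (finalPair w).2.2)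

/-- A word over {L,R} is a Farey word when its first symbol is `L`. -/
def IsFareyWord (w : List LR) : Prop := w.head? = some LR.L

/-- Concatenation of degree sequences:
[a₁,…,a_s] ⊕ [b₁,…,b_t] = [a₁+1, a₂, …, a_{s−1}, a_s+b₁, b₂, …, b_{t−1}, b_t+1]. -/
def oplus (A B : List ℕ) : List ℕ :=
  (A.dropLast.modifyHead (· + 1)) ++ [A.getLastD 0 + B.headD 0] ++ B.tail.dropLast
    ++ [B.getLastD 0 + 1]

/-- Update of the pair (D(left ancestor), D(right ancestor)) of unreduced degree
sequences along one symbol. -/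
def degStep : (List ℕ × List ℕ) → LR → (List ℕ × List ℕ)
  | (A, B), LR.L => (A, oplus A B)
  | (A, B), LR.R => (oplus A B, B)

/-- The pair (D(a/b), D(c/d)) of unreduced degree sequences of the final pair of a word;
0/1 and 1/1 are both assigned the list [1,1]. -/
def degPair (w : List LR) : List ℕ × List ℕ :=
  w.tail.foldl degStep ([1, 1], [1, 1])

/-- The unreduced degree sequence D(⟨w⟩) = D(a/b) ⊕ D(c/d) of the value of a word. -/
def Dseq (w : List LR) : List ℕ :=
  oplus (degPair w).1 (degPair w).2

/-- Reduction: [k₁,…,k_{q+1}] becomes [k₂,…,k_q, k₁+k_{q+1}]; the last entry is the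
boundary degree and the remaining ones are the inner degrees. -/
def reduce (D : List ℕ) : List ℕ :=
  D.tail.dropLast ++ [D.headD 0 + D.getLastD 0]

/-- The reduced degree sequence of the Haros graph G_{⟨w⟩}. -/
def degSeq (w : List LR) : List ℕ := reduce (Dseq w)

/-- Degree-distribution entropy S of the Haros graph G_{⟨w⟩}:
S = −Σ_k P(k)·ln P(k), summed over the degree values occurring in the reduced
degree sequence, where P(k) = m(k)/q. -/
noncomputable def Sent (w : List LR) : ℝ :=
  -∑ k ∈ (degSeq w).toFinset,
    (((degSeq w).count k : ℝ) / ((value w).2 : ℝ)) *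
      Real.log (((degSeq w).count k : ℝ) / ((value w).2 : ℝ))

/-- Reduced entropy H of the Haros graph G_{⟨w⟩} (with the convention 0·ln 0 = 0,
automatic since Real.log 0 = 0). -/
noncomputable def Hent (w : List LR) : ℝ :=
  let x : ℝ := ((value w).1 : ℝ) / ((value w).2 : ℝ)
  if x ≤ 1 / 2 then
    Sent w + 2 * x * Real.log x + (1 - 2 * x) * Real.log (1 - 2 * x)
  else
    Sent w + 2 * (1 - x) * Real.log (1 - x) + (2 * x - 1) * Real.log (2 * x - 1)

/-! ### Part 1: uniqueness of Farey words -/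

abbrev FS := (ℕ × ℕ) × (ℕ × ℕ)

def med (s : FS) : ℕ × ℕ := (s.1.1 + s.2.1, s.1.2 + s.2.2)

def Good (s : FS) : Prop := s.1.2 * s.2.1 = s.1.1 * s.2.2 + 1

lemma good_step (s : FS) (σ : LR) (h : Good s) : Good (fareyStep s σ) := by
  obtain ⟨⟨a, b⟩, ⟨c, d⟩⟩ := s
  unfold Good at *
  cases σ <;> simp [fareyStep] at * <;> nlinarith [h]

lemma bounds : ∀ (v : List LR) (s : FS), Good s →
    s.1.1 * (med (v.foldl fareyStep s)).2 < s.1.2 * (med (v.foldl fareyStep s)).1 ∧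
    (med (v.foldl fareyStep s)).1 * s.2.2 < (med (v.foldl fareyStep s)).2 * s.2.1 := by
  intro v
  induction v with
  | nil =>
    intro s hs
    obtain ⟨⟨a, b⟩, ⟨c, d⟩⟩ := s
    unfold Good at hs
    simp [med] at *
    constructor <;> nlinarith [hs]
  | cons σ u ih =>
    intro s hs
    obtain ⟨⟨a, b⟩, ⟨c, d⟩⟩ := s
    have hs' := good_step ((a, b), (c, d)) σ hs
    have h2 := ih _ hs'
    unfold Good at hs
    simp at hs
    cases σ with
    | L =>
      simp only [List.foldl_cons]
      simp [fareyStep] at h2 ⊢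
      obtain ⟨hA, hB⟩ := h2
      constructor
      · exact hA
      · nlinarith [hA, hB]
    | R =>
      simp only [List.foldl_cons]
      simp [fareyStep] at h2 ⊢
      obtain ⟨hA, hB⟩ := h2
      constructor
      · nlinarith [hA, hB]
      · exact hB

lemma farey_inj : ∀ (v₁ v₂ : List LR) (s : FS), Good s →
    med (v₁.foldl fareyStep s) = med (v₂.foldl fareyStep s) → v₁ = v₂ := by
  intro v₁
  induction v₁ with
  | nil =>
    intro v₂ s hs he
    cases v₂ with
    | nil => rfl
    | cons σ u =>
      exfalso
      obtain ⟨⟨a, b⟩, ⟨c, d⟩⟩ := s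
      have hb := bounds u (fareyStep ((a, b), (c, d)) σ) (good_step _ σ hs)
      simp only [List.foldl_cons] at he
      rw [← he] at hb
      simp [med] at he hb ⊢
      cases σ <;> simp [fareyStep] at hb <;> nlinarith [hb.1, hb.2]
  | cons σ₁ u₁ ih =>
    intro v₂ s hs he
    cases v₂ with
    | nil =>
      exfalso
      obtain ⟨⟨a, b⟩, ⟨c, d⟩⟩ := s
      have hb := bounds u₁ (fareyStep ((a, b), (c, d)) σ₁) (good_step _ σ₁ hs)
      simp only [List.foldl_cons] at he
      rw [he] at hb
      cases σ₁ <;> simp [fareyStep, med] at hb <;> nlinarith [hb.1, hb.2]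
    | cons σ₂ u₂ =>
      obtain ⟨⟨a, b⟩, ⟨c, d⟩⟩ := s
      simp only [List.foldl_cons] at he
      have hb₁ := bounds u₁ (fareyStep ((a, b), (c, d)) σ₁) (good_step _ σ₁ hs)
      have hb₂ := bounds u₂ (fareyStep ((a, b), (c, d)) σ₂) (good_step _ σ₂ hs)
      rw [← he] at hb₂
      have hσ : σ₁ = σ₂ := by
        cases σ₁ <;> cases σ₂ <;>
          first
          | rfl
          | (exfalso
             simp [fareyStep] at hb₁ hb₂
             nlinarith [hb₁.1, hb₁.2, hb₂.1, hb₂.2])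
      subst hσ
      have := ih u₂ (fareyStep ((a, b), (c, d)) σ₁) (good_step _ σ₁ hs) he
      rw [this]

def Tm (s : FS) : FS := ((s.1.1, s.1.1 + s.1.2), (s.2.1, s.2.1 + s.2.2))

lemma fold_Tm : ∀ (v : List LR) (s : FS),
    v.foldl fareyStep (Tm s) = Tm (v.foldl fareyStep s) := by
  intro v
  induction v with
  | nil => intro s; rfl
  | cons σ u ih =>
    intro s
    obtain ⟨⟨a, b⟩, ⟨c, d⟩⟩ := s
    simp only [List.foldl_cons]
    rw [show fareyStep (Tm ((a, b), (c, d))) σ = Tm (fareyStep ((a, b), (c, d)) σ) by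
      cases σ <;> simp [fareyStep, Tm, Prod.ext_iff] <;> omega]
    exact ih _

lemma value_L (w : List LR) (hw : IsFareyWord w) :
    value (LR.L :: w) = ((value w).1, (value w).1 + (value w).2) := by
  obtain ⟨v, rfl⟩ : ∃ v, w = LR.L :: v := by
    cases w with
    | nil => simp [IsFareyWord] at hw
    | cons a v =>
      simp [IsFareyWord] at hw
      exact ⟨v, by rw [hw]⟩
  have h1 : finalPair (LR.L :: LR.L :: v) = Tm (finalPair (LR.L :: v)) := by
    show (LR.L :: v).foldl fareyStep ((0, 1), (1, 1)) = Tm (v.foldl fareyStep ((0, 1), (1, 1)))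
    simp only [List.foldl_cons]
    rw [show fareyStep ((0, 1), (1, 1)) LR.L = Tm ((0, 1), (1, 1)) from rfl]
    exact fold_Tm v _
  unfold value
  rw [h1]
  obtain ⟨⟨a, b⟩, ⟨c, d⟩⟩ := finalPair (LR.L :: v)
  simp [Tm, Prod.ext_iff]
  omega

lemma farey_unique (w₁ w₂ : List LR) (h1 : IsFareyWord w₁) (h2 : IsFareyWord w₂)
    (he : value w₁ = value w₂) : w₁ = w₂ := by
  obtain ⟨v₁, rfl⟩ : ∃ v, w₁ = LR.L :: v := by
    cases w₁ with
    | nil => simp [IsFareyWord] at h1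
    | cons a v => simp [IsFareyWord] at h1; exact ⟨v, by rw [h1]⟩
  obtain ⟨v₂, rfl⟩ : ∃ v, w₂ = LR.L :: v := by
    cases w₂ with
    | nil => simp [IsFareyWord] at h2
    | cons a v => simp [IsFareyWord] at h2; exact ⟨v, by rw [h2]⟩
  have hg : Good ((0, 1), (1, 1)) := by simp [Good]
  have := farey_inj v₁ v₂ ((0, 1), (1, 1)) hg he
  rw [this]

/-! ### Part 2: degree sequence counting invariant -/

lemma dropLast_cc (h l : ℕ) (m : List ℕ) : (h :: (m ++ [l])).dropLast = h :: m := by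
  rw [show h :: (m ++ [l]) = (h :: m) ++ [l] from rfl, List.dropLast_concat]

lemma getLast?_cc (h l : ℕ) (m : List ℕ) : (h :: (m ++ [l])).getLast? = some l := by
  rw [show h :: (m ++ [l]) = (h :: m) ++ [l] from rfl, List.getLast?_concat]

lemma oplus_eq (h1 l1 h2 l2 : ℕ) (m1 m2 : List ℕ) :
    oplus (h1 :: (m1 ++ [l1])) (h2 :: (m2 ++ [l2]))
      = (h1+1) :: ((m1 ++ (l1 + h2) :: m2) ++ [l2 + 1]) := by
  rw [oplus, dropLast_cc]
  simp [List.getLastD, getLast?_cc, List.dropLast_concat]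

/-- count relation on middles -/
def Cnt (m m' : List ℕ) : Prop := ∀ k, 5 ≤ k → m'.count (k+1) = m.count k

def DInv (P P' : List ℕ × List ℕ) : Prop :=
  (P.1 = [1,1] ∧ P'.1 = [1,1] ∧ P.2 = [1,1] ∧ P'.2 = [2,2,2])
  ∨ (P.1 = [1,1] ∧ P'.1 = [1,1] ∧
      ∃ m m' l, P.2 = 2 :: (m ++ [l]) ∧ P'.2 = 2 :: (m' ++ [l+1]) ∧ Cnt m m')
  ∨ ((∃ h m m', P.1 = h :: (m ++ [2]) ∧ P'.1 = h :: (m' ++ [3]) ∧ Cnt m m')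
      ∧ P.2 = [1,1] ∧ P'.2 = [2,2,2])
  ∨ ((∃ h m m' l, P.1 = h :: (m ++ [l]) ∧ P'.1 = h :: (m' ++ [l+1]) ∧ Cnt m m')
      ∧ (∃ h m m' l, P.2 = h :: (m ++ [l]) ∧ P'.2 = h :: (m' ++ [l+1]) ∧ Cnt m m'))

lemma e11 : ([1,1] : List ℕ) = 1 :: ([] ++ [1]) := rfl
lemma e222 : ([2,2,2] : List ℕ) = 2 :: ([2] ++ [2]) := rfl

lemma cnt_cons (x y : ℕ) (m m' : List ℕ) (h : Cnt m m') (hxy : x ≤ 4 ∧ y ≤ 5) :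
    Cnt (x :: m) (y :: m') := by
  intro k hk
  simp only [List.count_cons]
  rw [h k hk]
  obtain ⟨hx, hy⟩ := hxy
  simp only [beq_iff_eq]
  split_ifs <;> omega

lemma cnt_append (x y : ℕ) (m m' : List ℕ) (h : Cnt m m') (hxy : x ≤ 4 ∧ y ≤ 5) :
    Cnt (m ++ [x]) (m' ++ [y]) := by
  intro k hk
  simp only [List.count_append, List.count_cons, List.count_nil, beq_iff_eq]
  rw [h k hk]
  obtain ⟨hx, hy⟩ := hxy
  split_ifs <;> omega

lemma cnt_append2 (x y z : ℕ) (m m' : List ℕ) (h : Cnt m m')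
    (hx : x ≤ 4) (hy : y ≤ 5) (hz : z ≤ 4) : Cnt (m ++ [x]) (m' ++ [y, z]) := by
  intro k hk
  simp only [List.count_append, List.count_cons, List.count_nil, beq_iff_eq]
  rw [h k hk]
  split_ifs <;> omega

lemma cnt_mid (x : ℕ) (m1 m1' m2 m2' : List ℕ) (h1 : Cnt m1 m1') (h2 : Cnt m2 m2') :
    Cnt (m1 ++ x :: m2) (m1' ++ (x+1) :: m2') := by
  intro k hk
  simp only [List.count_append, List.count_cons, beq_iff_eq]
  rw [h1 k hk, h2 k hk]
  split_ifs <;> omega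

lemma cnt_nil : Cnt [] [] := by intro k hk; rfl

lemma inv_step (P P' : List ℕ × List ℕ) (σ : LR) (h : DInv P P') :
    DInv (degStep P σ) (degStep P' σ) := by
  obtain ⟨A, B⟩ := P
  obtain ⟨A', B'⟩ := P'
  simp only [DInv] at h ⊢
  rcases h with ⟨hA, hA', hB, hB'⟩ | ⟨hA, hA', m, m', l, hB, hB', hC⟩ |
      ⟨⟨h1, m, m', hA, hA', hC⟩, hB, hB'⟩ |
      ⟨⟨h1, m1, m1', l1, hA, hA', hC1⟩, ⟨h2, m2, m2', l2, hB, hB', hC2⟩⟩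
  · -- case 1: initial
    subst hA; subst hA'; subst hB; subst hB'
    have ho : oplus [1,1] [1,1] = 2 :: ([2] ++ [2]) := by
      rw [e11, oplus_eq]; rfl
    have ho' : oplus [1,1] [2,2,2] = 2 :: ([3,2] ++ [3]) := by
      rw [e11, e222, oplus_eq]; rfl
    cases σ with
    | L =>
      refine Or.inr (Or.inl ⟨rfl, rfl, [2], [3,2], 2, ?_, ?_, ?_⟩)
      · simpa [degStep] using ho
      · simpa [degStep] using ho'
      · intro k hk; simp only [List.count_cons, List.count_nil, beq_iff_eq]; split_ifs <;> omega
    | R =>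
      refine Or.inr (Or.inr (Or.inl ⟨⟨2, [2], [3,2], ?_, ?_, ?_⟩, rfl, rfl⟩))
      · simpa [degStep] using ho
      · simpa [degStep] using ho'
      · intro k hk; simp only [List.count_cons, List.count_nil, beq_iff_eq]; split_ifs <;> omega
  · -- case 2: A seed, B general with head 2
    subst hA; subst hA'; subst hB; subst hB'
    have ho : oplus [1,1] (2 :: (m ++ [l])) = 2 :: ((3 :: m) ++ [l+1]) := by
      rw [e11, oplus_eq]; rfl
    have ho' : oplus [1,1] (2 :: (m' ++ [l+1])) = 2 :: ((3 :: m') ++ [l+1+1]) := by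
      rw [e11, oplus_eq]; rfl
    have hC2 : Cnt (3 :: m) (3 :: m') := cnt_cons 3 3 m m' hC ⟨by norm_num, by norm_num⟩
    cases σ with
    | L =>
      exact Or.inr (Or.inl ⟨rfl, rfl, 3 :: m, 3 :: m', l + 1, by simpa [degStep] using ho,
        by simpa [degStep] using ho', hC2⟩)
    | R =>
      refine Or.inr (Or.inr (Or.inr ⟨⟨2, 3 :: m, 3 :: m', l + 1, by simpa [degStep] using ho,
        by simpa [degStep] using ho', hC2⟩, 2, m, m', l, rfl, rfl, hC⟩))
  · -- case 3: A general with last 2, B seed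
    subst hA; subst hA'; subst hB; subst hB'
    have ho : oplus (h1 :: (m ++ [2])) [1,1] = (h1+1) :: ((m ++ [3]) ++ [2]) := by
      rw [e11, oplus_eq]
    have ho' : oplus (h1 :: (m' ++ [3])) [2,2,2] = (h1+1) :: ((m' ++ [5, 2]) ++ [3]) := by
      rw [e222, oplus_eq]
    have hC2 : Cnt (m ++ [3]) (m' ++ [5, 2]) := cnt_append2 3 5 2 m m' hC (by norm_num) (by norm_num) (by norm_num)
    cases σ with
    | L =>
      refine Or.inr (Or.inr (Or.inr ⟨⟨h1, m, m', 2, rfl, rfl, hC⟩,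
        h1 + 1, m ++ [3], m' ++ [5, 2], 2, by simpa [degStep] using ho,
        by simpa [degStep] using ho', hC2⟩))
    | R =>
      refine Or.inr (Or.inr (Or.inl ⟨⟨h1 + 1, m ++ [3], m' ++ [5, 2],
        by simpa [degStep] using ho, by simpa [degStep] using ho', hC2⟩, rfl, rfl⟩))
  · -- case 4: general
    subst hA; subst hA'; subst hB; subst hB'
    have ho := oplus_eq h1 l1 h2 l2 m1 m2
    have ho' : oplus (h1 :: (m1' ++ [l1+1])) (h2 :: (m2' ++ [l2+1]))
        = (h1+1) :: ((m1' ++ (l1 + 1 + h2) :: m2') ++ [l2 + 1 + 1]) := oplus_eq _ _ _ _ _ _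
    have hC3 : Cnt (m1 ++ (l1 + h2) :: m2) (m1' ++ (l1 + h2 + 1) :: m2') :=
      cnt_mid (l1 + h2) m1 m1' m2 m2' hC1 hC2
    cases σ with
    | L =>
      refine Or.inr (Or.inr (Or.inr ⟨⟨h1, m1, m1', l1, rfl, rfl, hC1⟩,
        h1 + 1, m1 ++ (l1 + h2) :: m2, m1' ++ (l1 + h2 + 1) :: m2', l2 + 1,
        by simpa [degStep] using ho, by simpa [degStep, show l1+1+h2 = l1+h2+1 by omega] using ho',
        hC3⟩))
    | R =>
      refine Or.inr (Or.inr (Or.inr ⟨⟨h1 + 1, m1 ++ (l1 + h2) :: m2, m1' ++ (l1 + h2 + 1) :: m2', l2 + 1,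
        by simpa [degStep] using ho, by simpa [degStep, show l1+1+h2 = l1+h2+1 by omega] using ho',
        hC3⟩, h2, m2, m2', l2, rfl, rfl, hC2⟩))

lemma inv_fold : ∀ (v : List LR) (P P' : List ℕ × List ℕ), DInv P P' →
    DInv (v.foldl degStep P) (v.foldl degStep P') := by
  intro v
  induction v with
  | nil => intro P P' h; exact h
  | cons σ u ih =>
    intro P P' h
    simp only [List.foldl_cons]
    exact ih _ _ (inv_step P P' σ h)

lemma reduce_count (h l k : ℕ) (M : List ℕ) :
    (reduce (h :: (M ++ [l]))).count k = M.count k + if h + l = k then 1 else 0 := by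
  rw [reduce]
  simp only [List.tail_cons, List.dropLast_concat, List.headD_cons, List.getLastD,
    getLast?_cc, Option.getD_some]
  simp [List.count_append, List.count_cons, beq_iff_eq]

lemma inv_count (P P' : List ℕ × List ℕ) (h : DInv P P') (k : ℕ) (hk : 5 ≤ k) :
    (reduce (oplus P.1 P.2)).count k = (reduce (oplus P'.1 P'.2)).count (k + 1) := by
  obtain ⟨A, B⟩ := P
  obtain ⟨A', B'⟩ := P'
  simp only [DInv] at h
  rcases h with ⟨hA, hA', hB, hB'⟩ | ⟨hA, hA', m, m', l, hB, hB', hC⟩ |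
      ⟨⟨h1, m, m', hA, hA', hC⟩, hB, hB'⟩ |
      ⟨⟨h1, m1, m1', l1, hA, hA', hC1⟩, ⟨h2, m2, m2', l2, hB, hB', hC2⟩⟩ <;>
    subst hA <;> subst hA' <;> subst hB <;> subst hB'
  · -- initial
    rw [show oplus [1,1] [1,1] = 2 :: ([2] ++ [2]) by rw [e11, oplus_eq]; rfl,
        show oplus [1,1] [2,2,2] = 2 :: ([3,2] ++ [3]) by rw [e11, e222, oplus_eq]; rfl,
        reduce_count, reduce_count]
    simp only [List.count_cons, List.count_nil, beq_iff_eq]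
    split_ifs <;> omega
  · -- case 2
    rw [show oplus [1,1] (2 :: (m ++ [l])) = 2 :: ((3 :: m) ++ [l+1]) by rw [e11, oplus_eq]; rfl,
        show oplus [1,1] (2 :: (m' ++ [l+1])) = 2 :: ((3 :: m') ++ [l+1+1]) by rw [e11, oplus_eq]; rfl,
        reduce_count, reduce_count]
    simp only [List.count_cons, beq_iff_eq]
    rw [hC k hk]
    split_ifs <;> omega
  · -- case 3
    rw [show oplus (h1 :: (m ++ [2])) [1,1] = (h1+1) :: ((m ++ [3]) ++ [2]) by rw [e11, oplus_eq],
        show oplus (h1 :: (m' ++ [3])) [2,2,2] = (h1+1) :: ((m' ++ [5,2]) ++ [3]) by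
          rw [e222, oplus_eq],
        reduce_count, reduce_count]
    simp only [List.count_append, List.count_cons, List.count_nil, beq_iff_eq]
    rw [hC k hk]
    split_ifs <;> omega
  · -- case 4
    rw [oplus_eq, oplus_eq, reduce_count, reduce_count]
    simp only [List.count_append, List.count_cons, beq_iff_eq]
    rw [hC1 k hk, hC2 k hk]
    split_ifs <;> omega

lemma main_count (w : List LR) (hw : IsFareyWord w) (k : ℕ) (hk : 5 ≤ k) :
    (degSeq w).count k = (degSeq (LR.L :: w)).count (k + 1) := by
  obtain ⟨v, rfl⟩ : ∃ v, w = LR.L :: v := by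
    cases w with
    | nil => simp [IsFareyWord] at hw
    | cons a v => simp [IsFareyWord] at hw; exact ⟨v, by rw [hw]⟩
  have hpair : degPair (LR.L :: LR.L :: v) = v.foldl degStep ([1,1], [2,2,2]) := by
    show (LR.L :: v).foldl degStep ([1,1], [1,1]) = _
    simp only [List.foldl_cons]
    rfl
  have hinv : DInv (degPair (LR.L :: v)) (degPair (LR.L :: LR.L :: v)) := by
    rw [hpair]
    exact inv_fold v _ _ (Or.inl ⟨rfl, rfl, rfl, rfl⟩)
  exact inv_count _ _ hinv k hk

/-- for every irreducible fraction x = p/q ∈ (0,1) and every k ≥ 5, the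
degree distributions of G_x and G_{F(x)} (with F(x) = x/(1+x) = p/(p+q)) satisfy the
scaling equation P(k, x) = (1 + x)·P(k+1, x/(1+x)). -/
theorem statement11 (p q : ℕ) (hcop : Nat.Coprime p q) (hp : 0 < p) (hpq : p < q)
    (k : ℕ) (hk : 5 ≤ k) (w w' : List LR) (hw : IsFareyWord w) (hw' : IsFareyWord w')
    (hval : value w = (p, q)) (hval' : value w' = (p, p + q)) :
    ((degSeq w).count k : ℝ) / (q : ℝ)
      = (1 + (p : ℝ) / (q : ℝ)) * (((degSeq w').count (k + 1) : ℝ) / ((p : ℝ) + (q : ℝ))) := by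
  have hwL : IsFareyWord (LR.L :: w) := rfl
  have hvL : value (LR.L :: w) = (p, p + q) := by
    rw [value_L w hw, hval]
  have hww : w' = LR.L :: w := farey_unique w' (LR.L :: w) hw' hwL (by rw [hval', hvL])
  subst hww
  rw [← main_count w hw k hk]
  have hq : (q : ℝ) ≠ 0 := by
    have : 0 < q := lt_trans hp hpq
    positivity
  have hpq2 : (p : ℝ) + (q : ℝ) ≠ 0 := by positivity
  field_simp
  ring
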